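/- Let G be an edge-colored graph. For a vertex v, define the colored saturated degree d^s(v) = c(G) - c(G - v), the number of colors that disappear when v is deleted. Then the sum over all vertices of d^s(v) is at most 2·c(G), with equality if and only if G is rainbow (all edges have pairwise distinct colors). -/
import Mathlib


open SimpleGraph Finset

/-- Number of edges of `G`. -/
noncomputable def eCount {V : Type*} (G : SimpleGraph V) : ℕ := G.edgeSet.ncard

/-- Number of distinct colors appearing on edges of `G` under coloring `χ`. -/
noncomputable def cCount {V : Type*} (G : SimpleGraph V) (χ : Sym2 V → ℕ) : ℕ := (χ '' G.edgeSet).ncard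

/-- Color degree of `v`: number of distinct colors on edges incident to `v`. -/
noncomputable def colorDeg {V : Type*} (G : SimpleGraph V) (χ : Sym2 V → ℕ) (v : V) : ℕ :=
  ((fun u => χ s(v, u)) '' G.neighborSet v).ncard

/-- `G` with coloring `χ` contains a rainbow triangle. -/
def HasRainbowTriangle {V : Type*} (G : SimpleGraph V) (χ : Sym2 V → ℕ) : Prop :=
  ∃ a b c : V, G.Adj a b ∧ G.Adj b c ∧ G.Adj a c ∧
    χ s(a, b) ≠ χ s(b, c) ∧ χ s(b, c) ≠ χ s(a, c) ∧ χ s(a, b) ≠ χ s(a, c)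

/-- `G` with coloring `χ` contains a properly colored 4-cycle. -/
def HasPCC4 {V : Type*} (G : SimpleGraph V) (χ : Sym2 V → ℕ) : Prop :=
  ∃ a b c d : V, a ≠ c ∧ b ≠ d ∧ G.Adj a b ∧ G.Adj b c ∧ G.Adj c d ∧ G.Adj d a ∧
    χ s(a, b) ≠ χ s(b, c) ∧ χ s(b, c) ≠ χ s(c, d) ∧
    χ s(c, d) ≠ χ s(d, a) ∧ χ s(d, a) ≠ χ s(a, b)

/-- Colored saturated degree: the number of colors that disappear when `v` is deleted. -/
noncomputable def satDeg {V : Type*} (G : SimpleGraph V) (χ : Sym2 V → ℕ) (v : V) : ℕ :=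
  cCount G χ - (χ '' {e ∈ G.edgeSet | v ∉ e}).ncard

/-- `∑ v, d^s(v) ≤ 2 c(G)`, with equality iff `G` is rainbow. -/
theorem stmt_7 {V : Type*} [Fintype V] (G : SimpleGraph V) (χ : Sym2 V → ℕ) :
    (∑ v : V, satDeg G χ v ≤ 2 * cCount G χ) ∧
      ((∑ v : V, satDeg G χ v = 2 * cCount G χ) ↔ Set.InjOn χ G.edgeSet) := by
  classical
  set E : Finset (Sym2 V) := (Set.toFinite G.edgeSet).toFinset with hE
  have hEc : (E : Set (Sym2 V)) = G.edgeSet := Set.Finite.coe_toFinset _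
  have hmemE : ∀ e, e ∈ E ↔ e ∈ G.edgeSet := fun e => by
    rw [← hEc]; rfl
  have hc : cCount G χ = (E.image χ).card := by
    rw [cCount, ← hEc, ← Finset.coe_image, Set.ncard_coe_finset]
  have hfilter : ∀ v : V, ({e ∈ G.edgeSet | v ∉ e} : Set (Sym2 V))
      = ↑(E.filter fun e => v ∉ e) := by
    intro v; rw [Finset.coe_filter]; ext e; simp [hmemE]
  have hsat : ∀ v : V, satDeg G χ v
      = ((E.image χ) \ ((E.filter fun e => v ∉ e).image χ)).card := by
    intro v
    rw [satDeg, hc, hfilter, ← Finset.coe_image, Set.ncard_coe_finset,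
      Finset.card_sdiff_of_subset (Finset.image_subset_image (Finset.filter_subset _ _))]
  -- counted set for a color x
  set f : ℕ → ℕ := fun x =>
    (Finset.univ.filter fun v : V => x ∉ (E.filter fun e => v ∉ e).image χ).card with hf
  have hsum : ∑ v : V, satDeg G χ v = ∑ x ∈ E.image χ, f x := by
    simp_rw [hsat, Finset.sdiff_eq_filter, Finset.card_filter]
    rw [Finset.sum_comm]
    refine Finset.sum_congr rfl fun x _ => ?_
    simp only [hf]
    rw [Finset.card_filter]
  -- characterization of counted vertices
  have hcond : ∀ (v : V) (x : ℕ), (x ∉ (E.filter fun e => v ∉ e).image χ)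
      ↔ ∀ e ∈ E, χ e = x → v ∈ e := by
    intro v x
    simp only [Finset.mem_image, Finset.mem_filter, not_exists]
    constructor
    · intro h e he hxe
      by_contra hv
      exact h e ⟨⟨he, hv⟩, hxe⟩
    · rintro h e ⟨⟨he, hv⟩, hxe⟩
      exact hv (h e he hxe)
  have hle : ∀ x ∈ E.image χ, f x ≤ 2 := by
    intro x hx
    obtain ⟨e0, he0, rfl⟩ := Finset.mem_image.mp hx
    induction e0 using Sym2.ind with
    | _ a b =>
      have : (Finset.univ.filter fun v : V => χ s(a,b) ∉ (E.filter fun e => v ∉ e).image χ)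
          ⊆ {a, b} := by
        intro v hv
        rw [Finset.mem_filter, hcond] at hv
        have := hv.2 s(a,b) he0 rfl
        simpa [Sym2.mem_iff] using this
      calc f (χ s(a,b)) ≤ ({a, b} : Finset V).card := Finset.card_le_card this
        _ ≤ 2 := Finset.card_insert_le _ _ |>.trans (by simp)
  have h2c : 2 * cCount G χ = ∑ _x ∈ E.image χ, 2 := by
    rw [hc, Finset.sum_const, smul_eq_mul, mul_comm]
  constructor
  · rw [hsum, h2c]
    exact Finset.sum_le_sum hle
  · rw [hsum, h2c, Finset.sum_eq_sum_iff_of_le hle]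
    constructor
    · -- all f x = 2 → InjOn
      intro h e1 he1 e2 he2 hxe
      by_contra hne
      have he1' : e1 ∈ E := (hmemE e1).mpr he1
      have he2' : e2 ∈ E := (hmemE e2).mpr he2
      have hx : χ e1 ∈ E.image χ := Finset.mem_image_of_mem χ he1'
      have h2 := h (χ e1) hx
      -- counted set has ≤ 1 element
      have hsub : ∀ v ∈ (Finset.univ.filter fun v : V =>
          χ e1 ∉ (E.filter fun e => v ∉ e).image χ), v ∈ e1 ∧ v ∈ e2 := by
        intro v hv
        rw [Finset.mem_filter, hcond] at hv
        exact ⟨hv.2 e1 he1' rfl, hv.2 e2 he2' hxe.symm⟩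
      have hcard : f (χ e1) ≤ 1 := by
        rw [hf]
        refine Finset.card_le_one.mpr ?_
        intro v hv w hw
        by_contra hvw
        obtain ⟨hv1, hv2⟩ := hsub v hv
        obtain ⟨hw1, hw2⟩ := hsub w hw
        have h1 : e1 = s(v, w) := ((Sym2.mem_and_mem_iff hvw).mp ⟨hv1, hw1⟩)
        have h2' : e2 = s(v, w) := ((Sym2.mem_and_mem_iff hvw).mp ⟨hv2, hw2⟩)
        exact hne (h1.trans h2'.symm)
      omega
    · -- InjOn → all f x = 2
      intro hinj x hx
      obtain ⟨e0, he0, rfl⟩ := Finset.mem_image.mp hx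
      have he0' : e0 ∈ G.edgeSet := (hmemE e0).mp he0
      have hnd : ¬ e0.IsDiag := G.not_isDiag_of_mem_edgeSet he0'
      induction e0 using Sym2.ind with
      | _ a b =>
        have hab : a ≠ b := by simpa using hnd
        have hset : (Finset.univ.filter fun v : V =>
            χ s(a,b) ∉ (E.filter fun e => v ∉ e).image χ) = {a, b} := by
          ext v
          simp only [Finset.mem_filter, Finset.mem_univ, true_and, hcond,
            Finset.mem_insert, Finset.mem_singleton]
          constructor
          · intro h
            have := h s(a,b) he0 rfl
            simpa [Sym2.mem_iff] using this
          · intro hv e he hxe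
            have : e = s(a,b) := hinj ((hmemE e).mp he) he0' hxe
            subst this
            simp [Sym2.mem_iff, hv]
        rw [hf]
        simp only [hset]
        rw [Finset.card_insert_of_notMem (by simpa using hab), Finset.card_singleton]
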